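/- Sign stability of Chow parameters: let f = f_x be a PUF of size n with Chow parameters p. If x_i ≥ 0 then p_i ≥ 0, and if x_i ≤ 0 then p_i ≤ 0. -/

import Mathlib

open Finset

/-- The ±1 value of the i-th coordinate of a challenge encoded as a Boolean vector. -/
def chal {n : ℕ} (c : Fin n → Bool) (i : Fin n) : ℝ := if c i then 1 else -1

/-- Scalar product c·x between a challenge and a weight vector. -/
def dotcx {n : ℕ} (c : Fin n → Bool) (x : Fin n → ℝ) : ℝ := ∑ i, chal c i * x i

/-- The PUF with weights x: responds `true` iff sign(c·x) = +1. -/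
noncomputable def puf {n : ℕ} (x : Fin n → ℝ) (c : Fin n → Bool) : Bool := decide (0 < dotcx c x)

/-- Nondegeneracy: c·x ≠ 0 for every challenge c. -/
def nondeg {n : ℕ} (x : Fin n → ℝ) : Prop := ∀ c : Fin n → Bool, dotcx c x ≠ 0

/-- Chow parameters of a Boolean function. -/
def chow {n : ℕ} (f : (Fin n → Bool) → Bool) (i : Fin n) : ℤ :=
  ∑ c ∈ Finset.univ.filter (fun c => f c = true), (if c i then (1:ℤ) else -1)

lemma dot_update {n : ℕ} (c : Fin n → Bool) (x : Fin n → ℝ) (i : Fin n) (b : Bool) :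
    dotcx (Function.update c i b) x
      = dotcx c x - chal c i * x i + (if b then (1:ℝ) else -1) * x i := by
  unfold dotcx
  rw [← Finset.sum_erase_add _ _ (Finset.mem_univ i),
      ← Finset.sum_erase_add _ _ (Finset.mem_univ i)]
  have h1 : ∀ j ∈ Finset.univ.erase i,
      chal (Function.update c i b) j * x j = chal c j * x j := by
    intro j hj
    have : j ≠ i := (Finset.mem_erase.mp hj).1
    simp [chal, Function.update_of_ne this]
  rw [Finset.sum_congr rfl h1]
  have h2 : chal (Function.update c i b) i = (if b then (1:ℝ) else -1) := by
    simp [chal]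
  rw [h2]; ring

lemma chow_eq {n : ℕ} (f : (Fin n → Bool) → Bool) (i : Fin n) :
    chow f i = ((Finset.univ.filter (fun c => f c = true ∧ c i = true)).card : ℤ)
      - ((Finset.univ.filter (fun c => f c = true ∧ c i = false)).card : ℤ) := by
  rw [chow, ← Finset.sum_filter_add_sum_filter_not _ (fun c => c i = true)]
  rw [Finset.filter_filter, Finset.filter_filter]
  have h1 : ∑ c ∈ Finset.univ.filter (fun c => f c = true ∧ c i = true),
      (if c i then (1:ℤ) else -1)
      = (Finset.univ.filter (fun c => f c = true ∧ c i = true)).card := by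
    rw [show (∑ c ∈ Finset.univ.filter (fun c => f c = true ∧ c i = true),
        (if c i then (1:ℤ) else -1)) = ∑ _c ∈ Finset.univ.filter
        (fun c => f c = true ∧ c i = true), (1:ℤ) from
      Finset.sum_congr rfl fun c hc => by simp [(Finset.mem_filter.mp hc).2.2]]
    simp
  have h2 : ∑ c ∈ Finset.univ.filter (fun c => f c = true ∧ ¬ c i = true),
      (if c i then (1:ℤ) else -1)
      = -((Finset.univ.filter (fun c => f c = true ∧ ¬ c i = true)).card : ℤ) := by
    rw [show (∑ c ∈ Finset.univ.filter (fun c => f c = true ∧ ¬ c i = true),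
        (if c i then (1:ℤ) else -1)) = ∑ _c ∈ Finset.univ.filter
        (fun c => f c = true ∧ ¬ c i = true), (-1:ℤ) from
      Finset.sum_congr rfl fun c hc => by simp [(Finset.mem_filter.mp hc).2.2]]
    simp
  rw [h1, h2]
  simp only [Bool.not_eq_true]
  ring

/-- sign stability of Chow parameters. -/
theorem chow_sign_stability {n : ℕ} (x : Fin n → ℝ) (hx : nondeg x) (i : Fin n) :
    (0 ≤ x i → 0 ≤ chow (puf x) i) ∧ (x i ≤ 0 → chow (puf x) i ≤ 0) := by
  rw [chow_eq]
  set A := Finset.univ.filter (fun c => puf x c = true ∧ c i = true) with hA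
  set B := Finset.univ.filter (fun c => puf x c = true ∧ c i = false) with hB
  constructor
  · intro hxi
    have hle : B.card ≤ A.card := by
      apply Finset.card_le_card_of_injOn (fun c => Function.update c i true)
      · intro c hc
        rw [hB, Finset.mem_coe, Finset.mem_filter] at hc
        obtain ⟨-, hf, hci⟩ := hc
        rw [hA, Finset.mem_coe, Finset.mem_filter]
        refine ⟨Finset.mem_univ _, ?_, by simp⟩
        have hd : 0 < dotcx c x := by
          have := hf; unfold puf at this; simpa using this
        have : dotcx (Function.update c i true) x = dotcx c x + 2 * x i := by
          rw [dot_update]; simp [chal, hci]; ring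
        unfold puf; rw [this]; simp; linarith
      · intro c hc c' hc' h
        simp only [hB, Finset.mem_coe, Finset.mem_filter] at hc hc'
        funext j
        by_cases hj : j = i
        · rw [hj, hc.2.2, hc'.2.2]
        · have := congrFun h j
          simpa [Function.update_of_ne hj] using this
    omega
  · intro hxi
    have hle : A.card ≤ B.card := by
      apply Finset.card_le_card_of_injOn (fun c => Function.update c i false)
      · intro c hc
        rw [hA, Finset.mem_coe, Finset.mem_filter] at hc
        obtain ⟨-, hf, hci⟩ := hc
        rw [hB, Finset.mem_coe, Finset.mem_filter]
        refine ⟨Finset.mem_univ _, ?_, by simp⟩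
        have hd : 0 < dotcx c x := by
          have := hf; unfold puf at this; simpa using this
        have : dotcx (Function.update c i false) x = dotcx c x - 2 * x i := by
          rw [dot_update]; simp [chal, hci]; ring
        unfold puf; rw [this]; simp; linarith
      · intro c hc c' hc' h
        simp only [hA, Finset.mem_coe, Finset.mem_filter] at hc hc'
        funext j
        by_cases hj : j = i
        · rw [hj, hc.2.2, hc'.2.2]
        · have := congrFun h j
          simpa [Function.update_of_ne hj] using this
    omega
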